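/- Let G be a finite simple graph, let e ∈ E(G) be an edge with endpoints u and v, let n be a natural number, R a commutative ring, and α ∈ R. Then Σ_{σ : V → {1,…,n}} α^{m_G(σ)} = Σ_{σ : V → {1,…,n}} α^{m_{G−e}(σ)} + (α − 1) · Σ_{σ : V → {1,…,n}, σ(u) = σ(v)} α^{m_{G−e}(σ)}, where m_H(σ) denotes the number of edges of the graph H whose two endpoints receive the same color under σ, and G−e is G with the edge e deleted. (This is the deletion–contraction identity Z_G = Z_{G−e} + (α − 1) Z_{G/e} for the dichromatic polynomial in the coloring formulation.) -/

import Mathlib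

/-- `m_H(σ)`: the number of edges of the graph `H` whose two endpoints receive the
same color under the coloring `σ`. -/
noncomputable def mImp {V : Type} (H : SimpleGraph V) {n : ℕ} (σ : V → Fin n) : ℕ :=
  Nat.card {e : Sym2 V // e ∈ H.edgeSet ∧ (Sym2.map σ e).IsDiag}

lemma mImp_delete {V : Type} [Fintype V] [DecidableEq V] (G : SimpleGraph V) (u v : V)
    (huv : G.Adj u v) {n : ℕ} (σ : V → Fin n) :
    mImp G σ = mImp (G.deleteEdges {s(u, v)}) σ + (if σ u = σ v then 1 else 0) := by
  classical
  unfold mImp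
  rw [Nat.card_eq_fintype_card, Nat.card_eq_fintype_card, Fintype.card_subtype,
    Fintype.card_subtype]
  have hset : (Finset.univ.filter fun e : Sym2 V =>
        e ∈ (G.deleteEdges {s(u, v)}).edgeSet ∧ (Sym2.map σ e).IsDiag)
      = (Finset.univ.filter fun e : Sym2 V =>
        e ∈ G.edgeSet ∧ (Sym2.map σ e).IsDiag) \ {s(u, v)} := by
    ext e
    simp [SimpleGraph.edgeSet_deleteEdges]
    tauto
  rw [hset]
  by_cases h : σ u = σ v
  · have hmem : s(u, v) ∈ (Finset.univ.filter fun e : Sym2 V =>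
        e ∈ G.edgeSet ∧ (Sym2.map σ e).IsDiag) := by
      simp [huv, h]
    rw [if_pos h, ← Finset.card_sdiff_add_card_eq_card
      (Finset.singleton_subset_iff.mpr hmem), Finset.card_singleton]
  · rw [if_neg h, Nat.add_zero]
    congr 1
    rw [eq_comm, Finset.sdiff_eq_self_iff_disjoint, Finset.disjoint_singleton_right]
    simp [h]

theorem dichromatic_deletion_contraction (V : Type) [Fintype V] [DecidableEq V]
    (G : SimpleGraph V) (u v : V) (huv : G.Adj u v) (n : ℕ)
    (R : Type) [CommRing R] (α : R) :
    ∑ σ : V → Fin n, α ^ mImp G σ =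
      (∑ σ : V → Fin n, α ^ mImp (G.deleteEdges {s(u, v)}) σ) +
        (α - 1) *
          ∑ σ ∈ Finset.univ.filter (fun σ : V → Fin n => σ u = σ v),
            α ^ mImp (G.deleteEdges {s(u, v)}) σ := by
  classical
  set G' := G.deleteEdges {s(u, v)} with hG'
  have key : ∀ σ : V → Fin n,
      α ^ mImp G σ = (if σ u = σ v then α else 1) * α ^ mImp G' σ := by
    intro σ
    rw [mImp_delete G u v huv σ, pow_add]
    by_cases h : σ u = σ v <;> simp [h, mul_comm, hG']
  have split : ∀ f : (V → Fin n) → R, ∑ σ : V → Fin n, f σ =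
      ∑ σ ∈ Finset.univ.filter (fun σ : V → Fin n => σ u = σ v), f σ +
      ∑ σ ∈ Finset.univ.filter (fun σ : V → Fin n => ¬ σ u = σ v), f σ :=
    fun f => (Finset.sum_filter_add_sum_filter_not _ _ _).symm
  have h1 : ∑ σ ∈ Finset.univ.filter (fun σ : V → Fin n => σ u = σ v),
      (if σ u = σ v then α else 1) * α ^ mImp G' σ =
      α * ∑ σ ∈ Finset.univ.filter (fun σ : V → Fin n => σ u = σ v), α ^ mImp G' σ := by
    rw [Finset.mul_sum]
    exact Finset.sum_congr rfl fun σ hσ => by rw [if_pos (Finset.mem_filter.mp hσ).2]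
  have h2 : ∑ σ ∈ Finset.univ.filter (fun σ : V → Fin n => ¬ σ u = σ v),
      (if σ u = σ v then α else 1) * α ^ mImp G' σ =
      ∑ σ ∈ Finset.univ.filter (fun σ : V → Fin n => ¬ σ u = σ v), α ^ mImp G' σ :=
    Finset.sum_congr rfl fun σ hσ => by rw [if_neg (Finset.mem_filter.mp hσ).2, one_mul]
  simp_rw [key]
  rw [split (fun σ => (if σ u = σ v then α else 1) * α ^ mImp G' σ), h1, h2,
    split (fun σ => α ^ mImp G' σ)]
  ring
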